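/- arXiv:2511.00292 — 3 statements merged into one kernel-verified Lean document; each statement's English description precedes it below -/
import Mathlib

section
/- Let A be a real diagonalizable 3×3 matrix with real eigenvalues λ1 ≤ λ2 ≤ λ3, and suppose J2(A) > 0. Let φ = arccos((3·√3/2)·J3(A)/J2(A)^{3/2}). Then for each k ∈ {1,2,3}, λk = (1/3)·(I1(A) + 2·√(3·J2(A))·cos((φ + 2·π·k)/3)). -/
noncomputable def dev (A : Matrix (Fin 3) (Fin 3) ℝ) : Matrix (Fin 3) (Fin 3) ℝ :=
  A - (Matrix.trace A / 3) • (1 : Matrix (Fin 3) (Fin 3) ℝ)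

noncomputable def I1 (A : Matrix (Fin 3) (Fin 3) ℝ) : ℝ := Matrix.trace A

noncomputable def J2 (A : Matrix (Fin 3) (Fin 3) ℝ) : ℝ :=
  (1 / 2) * Matrix.trace (dev A * dev A)

noncomputable def J3 (A : Matrix (Fin 3) (Fin 3) ℝ) : ℝ := (dev A).det

set_option maxHeartbeats 1000000

open Real

lemma div_mem_Icc' (b q : ℝ) (hq : 0 < q) (h : b^2 ≤ q^2) : -1 ≤ b/q ∧ b/q ≤ 1 := by
  constructor
  · rw [le_div_iff₀ hq]; nlinarith
  · rw [div_le_one hq]; nlinarith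

lemma core (s0 s1 s2 : ℝ) (h01 : s0 ≤ s1) (h12 : s1 ≤ s2) (hsum : s0 + s1 + s2 = 0)
    (j2 j3 : ℝ) (hj2d : j2 = (s0^2 + s1^2 + s2^2) / 2) (hj3d : j3 = s0 * s1 * s2)
    (hj2 : 0 < j2)
    (φ : ℝ) (hφ : φ = Real.arccos ((3 * Real.sqrt 3 / 2) * j3 / j2 ^ ((3 : ℝ) / 2))) :
    s0 = 2 * Real.sqrt (j2/3) * Real.cos ((φ + 2*Real.pi*1)/3) ∧
    s1 = 2 * Real.sqrt (j2/3) * Real.cos ((φ + 2*Real.pi*2)/3) ∧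
    s2 = 2 * Real.sqrt (j2/3) * Real.cos ((φ + 2*Real.pi*3)/3) := by
  have hs2' : s2 = -s0 - s1 := by linarith
  have hdisc : 27 * j3^2 ≤ 4 * j2^3 := by
    have key : 4 * j2^3 - 27 * j3^2 = ((s0-s1)*(s1-s2)*(s2-s0))^2 := by
      rw [hj2d, hj3d, hs2']; ring
    linarith [sq_nonneg ((s0-s1)*(s1-s2)*(s2-s0)), key]
  set w : ℝ := Real.sqrt 3 with hw
  have hw2 : w^2 = 3 := Real.sq_sqrt (by norm_num)
  have hwpos : 0 < w := Real.sqrt_pos.mpr (by norm_num)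
  set sj : ℝ := Real.sqrt j2 with hsj
  have hsj2 : sj^2 = j2 := Real.sq_sqrt hj2.le
  have hsjpos : 0 < sj := Real.sqrt_pos.mpr hj2
  have hpow : j2 ^ ((3:ℝ)/2) = j2 * sj := by
    rw [show (3:ℝ)/2 = 1 + 1/2 by ring, Real.rpow_add hj2, Real.rpow_one, hsj,
      Real.sqrt_eq_rpow]
  set c : ℝ := (3 * w / 2) * j3 / j2 ^ ((3:ℝ)/2) with hc
  have hqpos : (0:ℝ) < j2 * sj := by positivity
  have hcsq : (3 * w / 2 * j3)^2 ≤ (j2 * sj)^2 := by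
    have h1 : (3 * w / 2 * j3)^2 = 27/4 * j3^2 := by linear_combination (9/4*j3^2) * hw2
    have h2 : (j2 * sj)^2 = j2^3 := by linear_combination j2^2 * hsj2
    rw [h1, h2]; linarith
  have hdiv := div_mem_Icc' (3 * w / 2 * j3) (j2 * sj) hqpos hcsq
  have hc1 : -1 ≤ c := by rw [hc, hpow]; exact hdiv.1
  have hc2 : c ≤ 1 := by rw [hc, hpow]; exact hdiv.2
  have hcosφ : Real.cos φ = c := by rw [hφ]; exact Real.cos_arccos hc1 hc2
  have hφ0 : 0 ≤ φ := hφ ▸ Real.arccos_nonneg _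
  have hφπ : φ ≤ Real.pi := hφ ▸ Real.arccos_le_pi _
  set a : ℝ := φ / 3 with ha
  set x : ℝ := Real.cos a with hx
  set y : ℝ := Real.sin a with hy
  have hxy : x^2 + y^2 = 1 := by rw [hx, hy]; exact Real.cos_sq_add_sin_sq a
  have htriple : 4 * x^3 - 3 * x = c := by
    rw [hx, ← hcosφ, show φ = 3 * a by rw [ha]; ring, Real.cos_three_mul]
  have hynn : 0 ≤ y := by
    rw [hy]
    apply Real.sin_nonneg_of_nonneg_of_le_pi
    · rw [ha]; positivity
    · rw [ha]; linarith [Real.pi_pos]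
  have hyx : y ≤ w * x := by
    have h1 : Real.sin (a - Real.pi/3) ≤ 0 := by
      apply Real.sin_nonpos_of_nonpos_of_neg_pi_le
      · rw [ha]; linarith [Real.pi_pos]
      · rw [ha]; linarith [Real.pi_pos]
    rw [Real.sin_sub, Real.cos_pi_div_three, Real.sin_pi_div_three, ← hx, ← hy, ← hw] at h1
    linarith
  set r : ℝ := Real.sqrt (j2/3) with hr
  have hr2 : r^2 = j2/3 := Real.sq_sqrt (by positivity)
  have hrpos : 0 < r := Real.sqrt_pos.mpr (by positivity)
  have hrw : r * w = sj := by
    rw [hr, hw, hsj, ← Real.sqrt_mul (by positivity : (0:ℝ) ≤ j2/3)]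
    norm_num
  -- cosines of the shifted angles
  have hcos23 : Real.cos (2*Real.pi/3) = -(1/2) := by
    rw [show 2*Real.pi/3 = Real.pi - Real.pi/3 by ring, Real.cos_pi_sub,
      Real.cos_pi_div_three]
  have hsin23 : Real.sin (2*Real.pi/3) = w/2 := by
    rw [show 2*Real.pi/3 = Real.pi - Real.pi/3 by ring, Real.sin_pi_sub,
      Real.sin_pi_div_three, hw]
  have hcos43 : Real.cos (4*Real.pi/3) = -(1/2) := by
    rw [show 4*Real.pi/3 = Real.pi + Real.pi/3 by ring, Real.cos_add, Real.cos_pi,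
      Real.sin_pi, Real.cos_pi_div_three]; ring
  have hsin43 : Real.sin (4*Real.pi/3) = -(w/2) := by
    rw [show 4*Real.pi/3 = Real.pi + Real.pi/3 by ring, Real.sin_add, Real.cos_pi,
      Real.sin_pi, Real.sin_pi_div_three, hw]; ring
  have hct0 : Real.cos ((φ + 2*Real.pi*1)/3) = -(x/2) - w*y/2 := by
    rw [show (φ + 2*Real.pi*1)/3 = a + 2*Real.pi/3 by rw [ha]; ring, Real.cos_add,
      hcos23, hsin23, ← hx, ← hy]; ring
  have hct1 : Real.cos ((φ + 2*Real.pi*2)/3) = -(x/2) + w*y/2 := by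
    rw [show (φ + 2*Real.pi*2)/3 = a + 4*Real.pi/3 by rw [ha]; ring, Real.cos_add,
      hcos43, hsin43, ← hx, ← hy]; ring
  have hct2 : Real.cos ((φ + 2*Real.pi*3)/3) = x := by
    rw [show (φ + 2*Real.pi*3)/3 = a + 2*Real.pi by rw [ha]; ring,
      Real.cos_add_two_pi, hx]
  -- the three candidate roots
  set T0 : ℝ := -(r*x) - r*w*y with hT0
  set T1 : ℝ := -(r*x) + r*w*y with hT1
  set T2 : ℝ := 2*r*x with hT2
  have h3rw : 3*r^3*w = j2*sj := by linear_combination (3*r^2)*hrw + (3*sj)*hr2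
  have h2rc : 2*r^3*c = j3 := by
    rw [hc, hpow]
    rw [show 2*r^3*(3 * w / 2 * j3 / (j2 * sj)) = (3*r^3*w)*j3/(j2*sj) by ring, h3rw,
      mul_comm (j2*sj) j3, mul_div_assoc, div_self hqpos.ne', mul_one]
  have he1 : T0 + T1 + T2 = s0 + s1 + s2 := by
    rw [hT0, hT1, hT2]; linear_combination (-1) * hsum
  have he2 : T0*T1 + T0*T2 + T1*T2 = s0*s1 + s0*s2 + s1*s2 := by
    have hT : T0*T1 + T0*T2 + T1*T2 = -j2 := by
      rw [hT0, hT1, hT2]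
      linear_combination (-3)*hr2 + (-3*r^2)*hxy + (-(r^2*y^2))*hw2
    have hS : s0*s1 + s0*s2 + s1*s2 = -j2 := by
      linear_combination ((s0+s1+s2)/2)*hsum + hj2d
    rw [hT, hS]
  have he3 : T0*T1*T2 = s0*s1*s2 := by
    have hT : T0*T1*T2 = j3 := by
      rw [hT0, hT1, hT2]
      linear_combination (2*r^3)*htriple + h2rc + (-(2*r^3*x*y^2))*hw2 + (-(6*r^3*x))*hxy
    rw [hT, hj3d]
  have hpoly : ∀ z : ℝ, (z - T0)*(z - T1)*(z - T2) = (z - s0)*(z - s1)*(z - s2) := by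
    intro z
    linear_combination (-(z^2))*he1 + z*he2 - he3
  have hT01 : T0 ≤ T1 := by
    rw [hT0, hT1]
    linarith [mul_nonneg (mul_nonneg hrpos.le hwpos.le) hynn]
  have hT12 : T1 ≤ T2 := by
    rw [hT1, hT2]
    have h5 := mul_le_mul_of_nonneg_left hyx (le_of_lt (mul_pos hrpos hwpos))
    have h4 : r*w*(w*x) = 3*(r*x) := by linear_combination (r*x)*hw2
    linarith
  -- each s is a root, each T is a root
  have root_s : ∀ z : ℝ, (z - T0)*(z - T1)*(z - T2) = 0 → z = T0 ∨ z = T1 ∨ z = T2 := by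
    intro z hz
    rcases mul_eq_zero.mp hz with h | h
    · rcases mul_eq_zero.mp h with h | h
      · exact Or.inl (by linarith [sub_eq_zero.mp h])
      · exact Or.inr (Or.inl (by linarith [sub_eq_zero.mp h]))
    · exact Or.inr (Or.inr (by linarith [sub_eq_zero.mp h]))
  have root_t : ∀ z : ℝ, (z - s0)*(z - s1)*(z - s2) = 0 → z = s0 ∨ z = s1 ∨ z = s2 := by
    intro z hz
    rcases mul_eq_zero.mp hz with h | h
    · rcases mul_eq_zero.mp h with h | h
      · exact Or.inl (by linarith [sub_eq_zero.mp h])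
      · exact Or.inr (Or.inl (by linarith [sub_eq_zero.mp h]))
    · exact Or.inr (Or.inr (by linarith [sub_eq_zero.mp h]))
  have hs0m : s0 = T0 ∨ s0 = T1 ∨ s0 = T2 := root_s _ (by
    have h := hpoly s0; rw [h]; ring)
  have hs2m : s2 = T0 ∨ s2 = T1 ∨ s2 = T2 := root_s _ (by
    have h := hpoly s2; rw [h]; ring)
  have hT0m : T0 = s0 ∨ T0 = s1 ∨ T0 = s2 := root_t _ (by
    have h := hpoly T0; rw [← h]; ring)
  have hT2m : T2 = s0 ∨ T2 = s1 ∨ T2 = s2 := root_t _ (by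
    have h := hpoly T2; rw [← h]; ring)
  have h0 : s0 = T0 := by
    have h1 : T0 ≤ s0 := by rcases hs0m with h | h | h <;> linarith
    have h2 : s0 ≤ T0 := by rcases hT0m with h | h | h <;> linarith
    linarith
  have h2' : s2 = T2 := by
    have h1 : s2 ≤ T2 := by rcases hs2m with h | h | h <;> linarith
    have h2 : T2 ≤ s2 := by rcases hT2m with h | h | h <;> linarith
    linarith
  have h1' : s1 = T1 := by linarith [he1]
  refine ⟨?_, ?_, ?_⟩
  · rw [hct0, h0, hT0] <;> ring
  · rw [hct1, h1', hT1] <;> ring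
  · rw [hct2, h2', hT2] <;> ring

/-- For a real diagonalizable `3 × 3` matrix with real eigenvalues `λ1 ≤ λ2 ≤ λ3` and
`J2(A) > 0`, the eigenvalues are given by the trigonometric formula. -/
theorem eigvals_trig_formula (U : Matrix (Fin 3) (Fin 3) ℝ) (hU : IsUnit U)
    (l : Fin 3 → ℝ) (h12 : l 0 ≤ l 1) (h23 : l 1 ≤ l 2)
    (A : Matrix (Fin 3) (Fin 3) ℝ) (hA : A = U * Matrix.diagonal l * U⁻¹)
    (hJ2 : 0 < J2 A)
    (φ : ℝ) (hφ : φ = Real.arccos ((3 * Real.sqrt 3 / 2) * J3 A / (J2 A) ^ ((3 : ℝ) / 2))) :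
    ∀ k : Fin 3,
      l k = (1 / 3) * (I1 A + 2 * Real.sqrt (3 * J2 A) *
        Real.cos ((φ + 2 * Real.pi * ((k : ℕ) + 1)) / 3)) := by
  have hUdet : IsUnit U.det := (Matrix.isUnit_iff_isUnit_det U).mp hU
  have hUI : U⁻¹ * U = 1 := Matrix.nonsing_inv_mul U hUdet
  have hIU : U * U⁻¹ = 1 := Matrix.mul_nonsing_inv U hUdet
  set m : ℝ := (l 0 + l 1 + l 2) / 3 with hm
  have htr : Matrix.trace A = l 0 + l 1 + l 2 := by
    rw [hA, Matrix.trace_mul_cycle, hUI, one_mul, Matrix.trace_diagonal, Fin.sum_univ_three]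
  have hdev : dev A = U * Matrix.diagonal (fun i => l i - m) * U⁻¹ := by
    have h1 : Matrix.diagonal (fun i => l i - m)
        = Matrix.diagonal l - m • (1 : Matrix (Fin 3) (Fin 3) ℝ) := by
      rw [Matrix.smul_one_eq_diagonal, ← Matrix.diagonal_sub]
    rw [dev, htr, hA, ← hm, h1, Matrix.mul_sub, Matrix.sub_mul]
    congr 1
    rw [Matrix.mul_smul, Matrix.mul_one, Matrix.smul_mul, hIU]
  have hconj : ∀ M N : Matrix (Fin 3) (Fin 3) ℝ,
      (U * M * U⁻¹) * (U * N * U⁻¹) = U * (M * N) * U⁻¹ := by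
    intro M N
    simp only [← Matrix.mul_assoc]
    rw [Matrix.mul_assoc (U * M) U⁻¹ U, hUI, Matrix.mul_one, Matrix.mul_assoc U M N]
  have hJ2' : J2 A = ((l 0 - m)^2 + (l 1 - m)^2 + (l 2 - m)^2) / 2 := by
    rw [J2, hdev, hconj, Matrix.diagonal_mul_diagonal, Matrix.trace_mul_cycle, hUI,
      one_mul, Matrix.trace_diagonal, Fin.sum_univ_three]
    ring
  have hJ3' : J3 A = (l 0 - m) * ((l 1 - m) * (l 2 - m)) := by
    rw [J3, hdev, Matrix.det_mul, Matrix.det_mul, Matrix.det_nonsing_inv,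
      Matrix.det_diagonal, Fin.prod_univ_three]
    rw [mul_comm U.det _, mul_assoc, Ring.mul_inverse_cancel _ hUdet, mul_one]
    ring
  have hsum : (l 0 - m) + (l 1 - m) + (l 2 - m) = 0 := by rw [hm]; ring
  have hcore := core (l 0 - m) (l 1 - m) (l 2 - m) (by linarith) (by linarith) hsum
    (J2 A) (J3 A) hJ2' (by rw [hJ3']; ring) hJ2 φ hφ
  have hI1 : I1 A = l 0 + l 1 + l 2 := htr
  have hsq : Real.sqrt (J2 A / 3) = Real.sqrt (3 * J2 A) / 3 := by
    rw [show J2 A / 3 = (3 * J2 A) / 9 by ring,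
      Real.sqrt_div (by positivity : (0:ℝ) ≤ 3 * J2 A),
      show (9:ℝ) = 3^2 by norm_num, Real.sqrt_sq (by norm_num : (0:ℝ) ≤ 3)]
  intro k
  fin_cases k
  · have h := hcore.1
    rw [hsq] at h
    rw [hI1]
    simp only [Fin.reduceFinMk, Fin.isValue]
    norm_num at h ⊢
    ring_nf at h ⊢
    linarith
  · have h := hcore.2.1
    rw [hsq] at h
    rw [hI1]
    simp only [Fin.reduceFinMk, Fin.isValue]
    norm_num at h ⊢
    ring_nf at h ⊢
    linarith
  · have h := hcore.2.2
    rw [hsq] at h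
    rw [hI1]
    simp only [Fin.reduceFinMk, Fin.isValue]
    norm_num at h ⊢
    ring_nf at h ⊢
    linarith
end

section
/- The function Δ : M₃(ℝ) → ℝ given by Δ(A) = 4·J2(A)³ − 27·J3(A)² is Fréchet differentiable at every A, and its derivative applied to a direction H ∈ M₃(ℝ) equals ⟨dev(12·J2(A)²·Aᵀ − 54·J3(A)·cof(dev(A))), H⟩_F. -/
attribute [local instance] Matrix.frobeniusNormedAddCommGroup Matrix.frobeniusNormedSpace

/-- The discriminant `Δ(A) = 4·J2(A)³ − 27·J3(A)²`. -/
noncomputable def Δ (A : Matrix (Fin 3) (Fin 3) ℝ) : ℝ := 4 * J2 A ^ 3 - 27 * J3 A ^ 2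

/-- The cofactor matrix `cof(M) = (adjugate M)ᵀ`. -/
noncomputable def cof (M : Matrix (Fin 3) (Fin 3) ℝ) : Matrix (Fin 3) (Fin 3) ℝ :=
  (Matrix.adjugate M).transpose

/-- The Frobenius inner product `⟨X, Y⟩_F = tr(Xᵀ·Y)`. -/
noncomputable def frobInner (X Y : Matrix (Fin 3) (Fin 3) ℝ) : ℝ :=
  Matrix.trace (X.transpose * Y)

noncomputable def dL (i j : Fin 3) : @ContinuousLinearMap ℝ ℝ _ _ (RingHom.id ℝ) (Matrix (Fin 3) (Fin 3) ℝ)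
    PseudoMetricSpace.toUniformSpace.toTopologicalSpace _ ℝ _ _ _ _ :=
  LinearMap.toContinuousLinearMap
    { toFun := fun A => dev A i j
      map_add' := by
        intro A B
        simp [dev, Matrix.sub_apply, Matrix.smul_apply, Matrix.add_apply]
        ring
      map_smul' := by
        intro c A
        simp [dev, Matrix.sub_apply, Matrix.smul_apply]
        ring }

lemma dL_apply (i j : Fin 3) (A : Matrix (Fin 3) (Fin 3) ℝ) : dL i j A = dev A i j := rfl

lemma J2_eq (A : Matrix (Fin 3) (Fin 3) ℝ) :
    J2 A = 1 / 2 * ∑ i : Fin 3, ∑ j : Fin 3, dL i j A * dL j i A := by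
  simp [J2, Matrix.trace, Matrix.diag, Matrix.mul_apply, dL_apply]

lemma J3_eq (A : Matrix (Fin 3) (Fin 3) ℝ) :
    J3 A = dL 0 0 A * (dL 1 1 A * dL 2 2 A - dL 1 2 A * dL 2 1 A)
      - dL 0 1 A * (dL 1 0 A * dL 2 2 A - dL 1 2 A * dL 2 0 A)
      + dL 0 2 A * (dL 1 0 A * dL 2 1 A - dL 1 1 A * dL 2 0 A) := by
  simp [J3, Matrix.det_fin_three, dL_apply]
  ring

set_option maxHeartbeats 2000000 in
/-- The discriminant `Δ` is Fréchet differentiable at every `A`, with derivative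
`H ↦ ⟨dev(12·J2(A)²·Aᵀ − 54·J3(A)·cof(dev(A))), H⟩_F`. -/
theorem disc_hasFDerivAt (A : Matrix (Fin 3) (Fin 3) ℝ) :
    DifferentiableAt ℝ Δ A ∧
      ∀ H : Matrix (Fin 3) (Fin 3) ℝ,
        fderiv ℝ Δ A H =
          frobInner (dev ((12 * J2 A ^ 2) • A.transpose - (54 * J3 A) • cof (dev A))) H := by
  have h2 := HasFDerivAt.const_mul (HasFDerivAt.sum (u := Finset.univ)
      (fun (i : Fin 3) _ => HasFDerivAt.sum (u := Finset.univ)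
        (fun (j : Fin 3) _ => HasFDerivAt.mul ((dL i j).hasFDerivAt (x := A))
          ((dL j i).hasFDerivAt)))) ((1 : ℝ)/2)
  have hJ2 := h2.congr_of_eventuallyEq (Filter.Eventually.of_forall J2_eq)
  have h3 := (HasFDerivAt.add
      (HasFDerivAt.sub
        (HasFDerivAt.mul ((dL 0 0).hasFDerivAt (x := A))
          (HasFDerivAt.sub (HasFDerivAt.mul ((dL 1 1).hasFDerivAt) ((dL 2 2).hasFDerivAt))
            (HasFDerivAt.mul ((dL 1 2).hasFDerivAt) ((dL 2 1).hasFDerivAt))))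
        (HasFDerivAt.mul ((dL 0 1).hasFDerivAt)
          (HasFDerivAt.sub (HasFDerivAt.mul ((dL 1 0).hasFDerivAt) ((dL 2 2).hasFDerivAt))
            (HasFDerivAt.mul ((dL 1 2).hasFDerivAt) ((dL 2 0).hasFDerivAt)))))
      (HasFDerivAt.mul ((dL 0 2).hasFDerivAt)
          (HasFDerivAt.sub (HasFDerivAt.mul ((dL 1 0).hasFDerivAt) ((dL 2 1).hasFDerivAt))
            (HasFDerivAt.mul ((dL 1 1).hasFDerivAt) ((dL 2 0).hasFDerivAt))))).congr_of_eventuallyEq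
      (Filter.Eventually.of_forall J3_eq)
  have hΔ := ((((hJ2.mul hJ2).mul hJ2).const_mul (4 : ℝ)).sub
      ((h3.mul h3).const_mul (27 : ℝ))).congr_of_eventuallyEq
      (Filter.Eventually.of_forall (fun M => show Δ M = _ by simp only [Δ, Pi.sub_apply, Pi.mul_apply, Pi.pow_apply]; ring))
  refine ⟨hΔ.differentiableAt, fun H => ?_⟩
  refine (congrArg (fun L => L H) hΔ.fderiv).trans ?_
  simp only [ContinuousLinearMap.coe_sub', ContinuousLinearMap.coe_smul',
    ContinuousLinearMap.coe_add', Pi.sub_apply, Pi.smul_apply, Pi.add_apply,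
    ContinuousLinearMap.coe_sum', Finset.sum_apply, ContinuousLinearMap.coe_neg',
    Pi.neg_apply, smul_eq_mul, Fin.sum_univ_three, dL_apply, ContinuousLinearMap.sub_apply,
    ContinuousLinearMap.add_apply, ContinuousLinearMap.smul_apply, ContinuousLinearMap.sum_apply,
    ContinuousLinearMap.neg_apply, Pi.mul_apply]
  simp only [frobInner, cof, dev, Matrix.adjugate_fin_three, Matrix.trace_fin_three,
    Matrix.mul_apply, Matrix.sub_apply, Matrix.smul_apply, Matrix.add_apply,
    Matrix.transpose_apply, Matrix.one_apply, Fin.sum_univ_three, Matrix.of_apply,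
    Matrix.cons_val', Matrix.cons_val_zero, Matrix.cons_val_one, Matrix.head_cons,
    Matrix.empty_val', Matrix.cons_val_fin_one, Matrix.head_fin_const, Matrix.cons_val_two,
    Matrix.tail_cons, smul_eq_mul, Fin.reduceEq, reduceIte]
  ring
end

section
/- For every real 3×3 matrix A, let B be the 3×3 matrix with entries B i j = tr(A^{i+j}) for i, j ∈ {0, 1, 2} (so B00 = tr(A⁰) = 3, B01 = B10 = tr(A), B02 = B11 = B20 = tr(A²), B12 = B21 = tr(A³), B22 = tr(A⁴)). Then det(B) = 4·J2(A)³ − 27·J3(A)². -/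
set_option maxHeartbeats 4000000 in
/-- Parlett's determinantal expression of the discriminant: with
`B i j = tr(A^(i+j))` for `i, j ∈ {0, 1, 2}`, `det B = 4·J2(A)³ − 27·J3(A)²`. -/
theorem disc_eq_det_trace_power_matrix (A : Matrix (Fin 3) (Fin 3) ℝ)
    (B : Matrix (Fin 3) (Fin 3) ℝ)
    (hB : ∀ i j : Fin 3, B i j = Matrix.trace (A ^ ((i : ℕ) + (j : ℕ)))) :
    B.det = 4 * J2 A ^ 3 - 27 * J3 A ^ 2 := by
  simp only [Matrix.det_fin_three, hB]
  norm_num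
  simp only [J2, J3, dev, pow_succ, pow_zero, one_mul,
    Matrix.trace_fin_three, Matrix.det_fin_three, Matrix.mul_apply,
    Fin.sum_univ_three, Matrix.sub_apply, Matrix.smul_apply, Matrix.one_apply,
    Fin.isValue, smul_eq_mul]
  norm_num [Fin.ext_iff]
  ring
end
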